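/- Let q = p^k be an odd prime power with p ∤ 5, and let S(q,a) = Σ_{1 ≤ x₁,x₂,x₃,x₄ ≤ q} e((a/q)·Q(x)) where Q(x) = x₁²+x₂²+x₃²+x₄²+(x₁+x₂+x₃+x₄-n)², gcd(a,q)=1. Then |S(q,a)| ≤ q² when p ∤ 10, |S(q,a)| ≤ √5·q² when p = 5, and |S(q,a)| ≤ 4q² when p = 2. -/

import Mathlib

open Complex Finset

/-- The complete exponential sum `S(q, a) = ∑_{1 ≤ x₁,x₂,x₃,x₄ ≤ q} e((a/q)·Q(x))`
where `Q(x) = x₁² + x₂² + x₃² + x₄² + (x₁ + x₂ + x₃ + x₄ - n)²`. -/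
noncomputable def expSumS (n q a : ℕ) : ℂ :=
  ∑ x₁ ∈ Icc 1 q, ∑ x₂ ∈ Icc 1 q, ∑ x₃ ∈ Icc 1 q, ∑ x₄ ∈ Icc 1 q,
    Complex.exp (2 * Real.pi * Complex.I * ((a : ℂ) / (q : ℂ)) *
      ((x₁ : ℂ) ^ 2 + (x₂ : ℂ) ^ 2 + (x₃ : ℂ) ^ 2 + (x₄ : ℂ) ^ 2 +
        ((x₁ : ℂ) + x₂ + x₃ + x₄ - (n : ℂ)) ^ 2))

lemma sum_Icc_zmod (q : ℕ) [NeZero q] (f : ZMod q → ℂ) :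
    ∑ x ∈ Icc 1 q, f (x : ZMod q) = ∑ z : ZMod q, f z := by
  have hq : 0 < q := Nat.pos_of_ne_zero (NeZero.ne q)
  refine Finset.sum_nbij' (fun x => (x : ZMod q))
    (fun z => if z = 0 then q else z.val) ?_ ?_ ?_ ?_ ?_
  · intro x hx; exact mem_univ _
  · intro z _
    split_ifs with h
    · simp [mem_Icc, hq]; omega
    · refine mem_Icc.mpr ⟨?_, (ZMod.val_lt z).le⟩
      exact Nat.one_le_iff_ne_zero.mpr (fun h0 => h (by
        rwa [ZMod.val_eq_zero] at h0))
  · intro x hx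
    rw [mem_Icc] at hx
    by_cases h : (x : ZMod q) = 0
    · rw [if_pos h]
      have hd : q ∣ x := (ZMod.natCast_eq_zero_iff x q).mp h
      exact (le_antisymm hx.2 (Nat.le_of_dvd (by omega) hd)).symm
    · rw [if_neg h, ZMod.val_natCast, Nat.mod_eq_of_lt]
      rcases Nat.lt_or_ge x q with h' | h'
      · exact h'
      · exact absurd (le_antisymm hx.2 h')
          (fun he => h (by rw [he]; exact_mod_cast ZMod.natCast_self q))
  · intro z _
    split_ifs with h
    · simp [h, ZMod.natCast_self]
    · exact ZMod.natCast_zmod_val z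
  · intro x hx; rfl

lemma conj_stdAddChar (q : ℕ) [NeZero q] (z : ZMod q) :
    (starRingEnd ℂ) (ZMod.stdAddChar z) = ZMod.stdAddChar (-z) := by
  rw [show z = ((z.val : ℤ) : ZMod q) by simp, ← Int.cast_neg,
    ZMod.stdAddChar_coe, ZMod.stdAddChar_coe, ← Complex.exp_conj]
  congr 1
  have : ((2 : ℂ) * Real.pi * I * (z.val : ℤ) / q) =
      ((2 * Real.pi * (z.val : ℤ) / q : ℝ) : ℂ) * I := by push_cast; ring
  rw [this, map_mul, Complex.conj_I, Complex.conj_ofReal]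
  push_cast; ring

def sigq (q : ℕ) (h : ZMod q × ZMod q × ZMod q × ZMod q) : ZMod q :=
  h.1 + h.2.1 + h.2.2.1 + h.2.2.2

def Tset (q : ℕ) [NeZero q] : Finset (ZMod q × ZMod q × ZMod q × ZMod q) :=
  Finset.univ.filter (fun h =>
    2 * (h.1 + sigq q h) = 0 ∧ 2 * (h.2.1 + sigq q h) = 0 ∧
    2 * (h.2.2.1 + sigq q h) = 0 ∧ 2 * (h.2.2.2 + sigq q h) = 0)

lemma mem_Tset {q : ℕ} [NeZero q] {h : ZMod q × ZMod q × ZMod q × ZMod q} :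
    h ∈ Tset q ↔ (2 * (h.1 + sigq q h) = 0 ∧ 2 * (h.2.1 + sigq q h) = 0 ∧
      2 * (h.2.2.1 + sigq q h) = 0 ∧ 2 * (h.2.2.2 + sigq q h) = 0) := by
  simp [Tset]

lemma kern_val {p k : ℕ} (hp : 0 < p) (hk : 1 ≤ k) [NeZero (p^k)] {s : ZMod (p^k)}
    (hs : (p : ZMod (p^k)) * s = 0) :
    s.val = p^(k-1) * (s.val / p^(k-1)) ∧ s.val / p^(k-1) < p := by
  have h1 : ((p * s.val : ℕ) : ZMod (p^k)) = 0 := by push_cast [ZMod.natCast_zmod_val]; exact hs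
  have h2 : p^k ∣ p * s.val := (ZMod.natCast_eq_zero_iff _ _).mp h1
  have hpk : p^k = p * p^(k-1) := by
    conv_lhs => rw [show k = (k-1) + 1 by omega]
    ring
  have h2' : p * p^(k-1) ∣ p * s.val := by rw [← hpk]; exact h2
  have hdvd : p^(k-1) ∣ s.val := (mul_dvd_mul_iff_left (hp.ne' : p ≠ 0)).mp h2'
  refine ⟨(Nat.mul_div_cancel' hdvd).symm, ?_⟩
  rw [Nat.div_lt_iff_lt_mul (pow_pos hp _)]
  have hlt : s.val < p * p^(k-1) := by rw [← hpk]; exact ZMod.val_lt s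
  omega

lemma Tset_card_one {q : ℕ} [NeZero q] (h2 : IsUnit (2 : ZMod q))
    (h5 : IsUnit (5 : ZMod q)) : (Tset q).card ≤ 1 := by
  have key : ∀ h ∈ Tset q, h = ((0 : ZMod q), (0 : ZMod q), (0 : ZMod q), (0 : ZMod q)) := by
    rintro ⟨x1, x2, x3, x4⟩ hh
    rw [mem_Tset] at hh
    simp only [sigq] at hh
    obtain ⟨c1, c2, c3, c4⟩ := hh
    rw [h2.mul_right_eq_zero] at c1 c2 c3 c4
    have hs : (5 : ZMod q) * (x1 + x2 + x3 + x4) = 0 := by linear_combination c1 + c2 + c3 + c4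
    rw [h5.mul_right_eq_zero] at hs
    have e1 : x1 = 0 := by linear_combination c1 - hs
    have e2 : x2 = 0 := by linear_combination c2 - hs
    have e3 : x3 = 0 := by linear_combination c3 - hs
    have e4 : x4 = 0 := by linear_combination c4 - hs
    simp [e1, e2, e3, e4]
  refine Finset.card_le_one.mpr (fun a ha b hb => ?_)
  rw [key a ha, key b hb]

lemma Tset_card_five {k : ℕ} (hk : 1 ≤ k) [NeZero (5^k)]
    (h2 : IsUnit (2 : ZMod (5^k))) : (Tset (5^k)).card ≤ 5 := by
  have main := Finset.card_le_card_of_injOn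
    (f := fun h : ZMod (5^k) × ZMod (5^k) × ZMod (5^k) × ZMod (5^k) =>
      (sigq (5^k) h).val / 5^(k-1))
    (s := Tset (5^k)) (t := Finset.range 5) ?_ ?_
  · simpa using main
  · rintro ⟨x1, x2, x3, x4⟩ hh
    rw [Finset.mem_coe, mem_Tset] at hh
    simp only [sigq] at hh
    obtain ⟨c1, c2, c3, c4⟩ := hh
    rw [h2.mul_right_eq_zero] at c1 c2 c3 c4
    have hs : ((5 : ℕ) : ZMod (5^k)) * sigq (5^k) (x1, x2, x3, x4) = 0 := by
      simp only [sigq]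
      push_cast
      linear_combination c1 + c2 + c3 + c4
    exact Finset.mem_range.mpr (kern_val (by norm_num) hk hs).2
  · rintro ⟨x1, x2, x3, x4⟩ ha ⟨y1, y2, y3, y4⟩ hb hab
    simp only [Finset.mem_coe, mem_Tset, sigq] at ha hb
    simp only [sigq] at hab
    obtain ⟨a1, a2, a3, a4⟩ := ha
    obtain ⟨b1, b2, b3, b4⟩ := hb
    rw [h2.mul_right_eq_zero] at a1 a2 a3 a4 b1 b2 b3 b4
    have hsa : ((5 : ℕ) : ZMod (5^k)) * (x1 + x2 + x3 + x4) = 0 := by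
      push_cast; linear_combination a1 + a2 + a3 + a4
    have hsb : ((5 : ℕ) : ZMod (5^k)) * (y1 + y2 + y3 + y4) = 0 := by
      push_cast; linear_combination b1 + b2 + b3 + b4
    have hva := (kern_val (by norm_num) hk hsa).1
    have hvb := (kern_val (by norm_num) hk hsb).1
    have hv : (x1 + x2 + x3 + x4).val = (y1 + y2 + y3 + y4).val := by
      rw [hva, hvb, hab]
    have hs : x1 + x2 + x3 + x4 = y1 + y2 + y3 + y4 := ZMod.val_injective _ hv
    have e1 : x1 = y1 := by linear_combination a1 - b1 - hs
    have e2 : x2 = y2 := by linear_combination a2 - b2 - hs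
    have e3 : x3 = y3 := by linear_combination a3 - b3 - hs
    have e4 : x4 = y4 := by linear_combination a4 - b4 - hs
    simp [e1, e2, e3, e4]

lemma Tset_card_two {k : ℕ} (hk : 1 ≤ k) [NeZero (2^k)]
    (h5 : IsUnit (5 : ZMod (2^k))) : (Tset (2^k)).card ≤ 16 := by
  have main := Finset.card_le_card_of_injOn
    (f := fun h : ZMod (2^k) × ZMod (2^k) × ZMod (2^k) × ZMod (2^k) =>
      ((h.1 + sigq (2^k) h).val / 2^(k-1), (h.2.1 + sigq (2^k) h).val / 2^(k-1),
       (h.2.2.1 + sigq (2^k) h).val / 2^(k-1), (h.2.2.2 + sigq (2^k) h).val / 2^(k-1)))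
    (s := Tset (2^k))
    (t := Finset.range 2 ×ˢ Finset.range 2 ×ˢ Finset.range 2 ×ˢ Finset.range 2) ?_ ?_
  · simpa using main
  · rintro ⟨x1, x2, x3, x4⟩ hh
    rw [Finset.mem_coe, mem_Tset] at hh
    obtain ⟨c1, c2, c3, c4⟩ := hh
    have two : ((2 : ℕ) : ZMod (2^k)) = 2 := by push_cast; ring
    rw [← two] at c1 c2 c3 c4
    simp only [Finset.mem_coe, Finset.mem_product, Finset.mem_range]
    exact ⟨(kern_val (by norm_num) hk c1).2, (kern_val (by norm_num) hk c2).2,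
      (kern_val (by norm_num) hk c3).2, (kern_val (by norm_num) hk c4).2⟩
  · rintro ⟨x1, x2, x3, x4⟩ ha ⟨y1, y2, y3, y4⟩ hb hab
    simp only [Finset.mem_coe, mem_Tset] at ha hb
    obtain ⟨a1, a2, a3, a4⟩ := ha
    obtain ⟨b1, b2, b3, b4⟩ := hb
    have two : ((2 : ℕ) : ZMod (2^k)) = 2 := by push_cast; ring
    rw [← two] at a1 a2 a3 a4 b1 b2 b3 b4
    simp only [Prod.mk.injEq] at hab
    obtain ⟨q1, q2, q3, q4⟩ := hab
    have v1 : (x1 + sigq _ (x1,x2,x3,x4)).val = (y1 + sigq _ (y1,y2,y3,y4)).val := by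
      rw [(kern_val (by norm_num) hk a1).1, (kern_val (by norm_num) hk b1).1, q1]
    have v2 : (x2 + sigq _ (x1,x2,x3,x4)).val = (y2 + sigq _ (y1,y2,y3,y4)).val := by
      rw [(kern_val (by norm_num) hk a2).1, (kern_val (by norm_num) hk b2).1, q2]
    have v3 : (x3 + sigq _ (x1,x2,x3,x4)).val = (y3 + sigq _ (y1,y2,y3,y4)).val := by
      rw [(kern_val (by norm_num) hk a3).1, (kern_val (by norm_num) hk b3).1, q3]
    have v4 : (x4 + sigq _ (x1,x2,x3,x4)).val = (y4 + sigq _ (y1,y2,y3,y4)).val := by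
      rw [(kern_val (by norm_num) hk a4).1, (kern_val (by norm_num) hk b4).1, q4]
    have w1 := ZMod.val_injective _ v1
    have w2 := ZMod.val_injective _ v2
    have w3 := ZMod.val_injective _ v3
    have w4 := ZMod.val_injective _ v4
    simp only [sigq] at w1 w2 w3 w4
    have hss : (5 : ZMod (2^k)) * (x1 + x2 + x3 + x4) = (5 : ZMod (2^k)) * (y1 + y2 + y3 + y4) := by
      linear_combination w1 + w2 + w3 + w4
    have hs : x1 + x2 + x3 + x4 = y1 + y2 + y3 + y4 := by
      have := h5.mul_left_cancel hss
      exact this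
    have e1 : x1 = y1 := by linear_combination w1 - hs
    have e2 : x2 = y2 := by linear_combination w2 - hs
    have e3 : x3 = y3 := by linear_combination w3 - hs
    have e4 : x4 = y4 := by linear_combination w4 - hs
    simp [e1, e2, e3, e4]

noncomputable def gfun (q a n : ℕ) [NeZero q] (v : ZMod q × ZMod q × ZMod q × ZMod q) : ℂ :=
  ZMod.stdAddChar ((a : ZMod q) * (v.1^2 + v.2.1^2 + v.2.2.1^2 + v.2.2.2^2 +
    (v.1 + v.2.1 + v.2.2.1 + v.2.2.2 - (n : ZMod q))^2))

lemma term_eq (q a n : ℕ) [NeZero q] (x1 x2 x3 x4 : ℕ) :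
    Complex.exp (2 * Real.pi * Complex.I * ((a : ℂ) / (q : ℂ)) *
      ((x1 : ℂ) ^ 2 + (x2 : ℂ) ^ 2 + (x3 : ℂ) ^ 2 + (x4 : ℂ) ^ 2 +
        ((x1 : ℂ) + x2 + x3 + x4 - (n : ℂ)) ^ 2))
    = gfun q a n ((x1 : ZMod q), (x2 : ZMod q), (x3 : ZMod q), (x4 : ZMod q)) := by
  have harg : (a : ZMod q) * (((x1 : ZMod q))^2 + ((x2 : ZMod q))^2 + ((x3 : ZMod q))^2 +
      ((x4 : ZMod q))^2 + ((x1 : ZMod q) + (x2 : ZMod q) + (x3 : ZMod q) + (x4 : ZMod q)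
        - (n : ZMod q))^2) = (((a * ((x1:ℤ)^2 + (x2:ℤ)^2 + (x3:ℤ)^2 + (x4:ℤ)^2 +
    ((x1:ℤ) + x2 + x3 + x4 - (n:ℤ))^2) : ℤ)) : ZMod q) := by
    push_cast; ring
  unfold gfun
  simp only
  rw [harg, ZMod.stdAddChar_coe]
  congr 1
  have hq : (q : ℂ) ≠ 0 := Nat.cast_ne_zero.mpr (NeZero.ne q)
  field_simp
  push_cast
  ring

lemma expSumS_eq (q a n : ℕ) [NeZero q] :
    expSumS n q a = ∑ v : ZMod q × ZMod q × ZMod q × ZMod q, gfun q a n v := by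
  rw [expSumS]
  have h4 : ∀ (x1 x2 x3 : ℕ), ∑ x4 ∈ Icc 1 q,
      Complex.exp (2 * Real.pi * Complex.I * ((a : ℂ) / (q : ℂ)) *
      ((x1 : ℂ) ^ 2 + (x2 : ℂ) ^ 2 + (x3 : ℂ) ^ 2 + (x4 : ℂ) ^ 2 +
        ((x1 : ℂ) + x2 + x3 + x4 - (n : ℂ)) ^ 2))
      = ∑ z4 : ZMod q, gfun q a n ((x1 : ZMod q), (x2 : ZMod q), (x3 : ZMod q), z4) := by
    intro x1 x2 x3
    rw [← sum_Icc_zmod q (fun z4 => gfun q a n ((x1 : ZMod q), (x2 : ZMod q), (x3 : ZMod q), z4))]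
    exact Finset.sum_congr rfl fun x4 _ => term_eq q a n x1 x2 x3 x4
  have e1 : (∑ x1 ∈ Icc 1 q, ∑ x2 ∈ Icc 1 q, ∑ x3 ∈ Icc 1 q, ∑ x4 ∈ Icc 1 q,
      Complex.exp (2 * Real.pi * Complex.I * ((a : ℂ) / (q : ℂ)) *
      ((x1 : ℂ) ^ 2 + (x2 : ℂ) ^ 2 + (x3 : ℂ) ^ 2 + (x4 : ℂ) ^ 2 +
        ((x1 : ℂ) + x2 + x3 + x4 - (n : ℂ)) ^ 2)))
      = ∑ x1 ∈ Icc 1 q, ∑ x2 ∈ Icc 1 q, ∑ x3 ∈ Icc 1 q, ∑ z4 : ZMod q,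
        gfun q a n ((x1 : ZMod q), (x2 : ZMod q), (x3 : ZMod q), z4) :=
    Finset.sum_congr rfl fun x1 _ => Finset.sum_congr rfl fun x2 _ =>
      Finset.sum_congr rfl fun x3 _ => h4 x1 x2 x3
  rw [e1]
  have e2 : (∑ x1 ∈ Icc 1 q, ∑ x2 ∈ Icc 1 q, ∑ x3 ∈ Icc 1 q, ∑ z4 : ZMod q,
      gfun q a n ((x1 : ZMod q), (x2 : ZMod q), (x3 : ZMod q), z4))
      = ∑ x1 ∈ Icc 1 q, ∑ x2 ∈ Icc 1 q, ∑ z3 : ZMod q, ∑ z4 : ZMod q,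
        gfun q a n ((x1 : ZMod q), (x2 : ZMod q), z3, z4) :=
    Finset.sum_congr rfl fun x1 _ => Finset.sum_congr rfl fun x2 _ =>
      sum_Icc_zmod q (fun z3 => ∑ z4 : ZMod q, gfun q a n ((x1:ZMod q), (x2:ZMod q), z3, z4))
  rw [e2]
  have e3 : (∑ x1 ∈ Icc 1 q, ∑ x2 ∈ Icc 1 q, ∑ z3 : ZMod q, ∑ z4 : ZMod q,
      gfun q a n ((x1 : ZMod q), (x2 : ZMod q), z3, z4))
      = ∑ x1 ∈ Icc 1 q, ∑ z2 : ZMod q, ∑ z3 : ZMod q, ∑ z4 : ZMod q,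
        gfun q a n ((x1 : ZMod q), z2, z3, z4) :=
    Finset.sum_congr rfl fun x1 _ =>
      sum_Icc_zmod q (fun z2 => ∑ z3 : ZMod q, ∑ z4 : ZMod q, gfun q a n ((x1:ZMod q), z2, z3, z4))
  rw [e3]
  rw [sum_Icc_zmod q (fun z1 => ∑ z2 : ZMod q, ∑ z3 : ZMod q, ∑ z4 : ZMod q, gfun q a n (z1, z2, z3, z4))]
  rw [Fintype.sum_prod_type]
  refine Finset.sum_congr rfl fun z1 _ => ?_
  rw [Fintype.sum_prod_type]
  refine Finset.sum_congr rfl fun z2 _ => ?_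
  rw [Fintype.sum_prod_type]

lemma sum4_factor (q : ℕ) [NeZero q] (f1 f2 f3 f4 : ZMod q → ℂ) (K : ℂ) :
    (∑ y1 : ZMod q, ∑ y2 : ZMod q, ∑ y3 : ZMod q, ∑ y4 : ZMod q,
      f1 y1 * f2 y2 * f3 y3 * f4 y4 * K)
    = (∑ y1 : ZMod q, f1 y1) * (∑ y2 : ZMod q, f2 y2) * (∑ y3 : ZMod q, f3 y3)
      * (∑ y4 : ZMod q, f4 y4) * K := by
  have e4 : ∀ a b c : ℂ, (∑ y4 : ZMod q, a * b * c * f4 y4 * K)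
      = a * b * c * (∑ y4 : ZMod q, f4 y4) * K := by
    intro a b c
    calc (∑ y4 : ZMod q, a * b * c * f4 y4 * K) = ∑ y4 : ZMod q, (a * b * c * K) * f4 y4 :=
          Finset.sum_congr rfl (fun y _ => by ring)
      _ = (a * b * c * K) * ∑ y4 : ZMod q, f4 y4 := (Finset.mul_sum _ _ _).symm
      _ = a * b * c * (∑ y4 : ZMod q, f4 y4) * K := by ring
  have e3 : ∀ a b : ℂ, (∑ y3 : ZMod q, a * b * f3 y3 * (∑ y4 : ZMod q, f4 y4) * K)
      = a * b * (∑ y3 : ZMod q, f3 y3) * (∑ y4 : ZMod q, f4 y4) * K := by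
    intro a b
    calc (∑ y3 : ZMod q, a * b * f3 y3 * (∑ y4 : ZMod q, f4 y4) * K)
        = ∑ y3 : ZMod q, (a * b * (∑ y4 : ZMod q, f4 y4) * K) * f3 y3 :=
          Finset.sum_congr rfl (fun y _ => by ring)
      _ = (a * b * (∑ y4 : ZMod q, f4 y4) * K) * ∑ y3 : ZMod q, f3 y3 := (Finset.mul_sum _ _ _).symm
      _ = a * b * (∑ y3 : ZMod q, f3 y3) * (∑ y4 : ZMod q, f4 y4) * K := by ring
  have e2 : ∀ a : ℂ, (∑ y2 : ZMod q, a * f2 y2 * (∑ y3 : ZMod q, f3 y3) * (∑ y4 : ZMod q, f4 y4) * K)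
      = a * (∑ y2 : ZMod q, f2 y2) * (∑ y3 : ZMod q, f3 y3) * (∑ y4 : ZMod q, f4 y4) * K := by
    intro a
    calc (∑ y2 : ZMod q, a * f2 y2 * (∑ y3 : ZMod q, f3 y3) * (∑ y4 : ZMod q, f4 y4) * K)
        = ∑ y2 : ZMod q, (a * (∑ y3 : ZMod q, f3 y3) * (∑ y4 : ZMod q, f4 y4) * K) * f2 y2 :=
          Finset.sum_congr rfl (fun y _ => by ring)
      _ = (a * (∑ y3 : ZMod q, f3 y3) * (∑ y4 : ZMod q, f4 y4) * K) * ∑ y2 : ZMod q, f2 y2 :=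
          (Finset.mul_sum _ _ _).symm
      _ = a * (∑ y2 : ZMod q, f2 y2) * (∑ y3 : ZMod q, f3 y3) * (∑ y4 : ZMod q, f4 y4) * K := by
          ring
  calc (∑ y1 : ZMod q, ∑ y2 : ZMod q, ∑ y3 : ZMod q, ∑ y4 : ZMod q,
        f1 y1 * f2 y2 * f3 y3 * f4 y4 * K)
      = ∑ y1 : ZMod q, ∑ y2 : ZMod q, ∑ y3 : ZMod q,
          f1 y1 * f2 y2 * f3 y3 * (∑ y4 : ZMod q, f4 y4) * K :=
        Finset.sum_congr rfl fun y1 _ => Finset.sum_congr rfl fun y2 _ =>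
          Finset.sum_congr rfl fun y3 _ => e4 _ _ _
    _ = ∑ y1 : ZMod q, ∑ y2 : ZMod q,
          f1 y1 * f2 y2 * (∑ y3 : ZMod q, f3 y3) * (∑ y4 : ZMod q, f4 y4) * K :=
        Finset.sum_congr rfl fun y1 _ => Finset.sum_congr rfl fun y2 _ => e3 _ _
    _ = ∑ y1 : ZMod q,
          f1 y1 * (∑ y2 : ZMod q, f2 y2) * (∑ y3 : ZMod q, f3 y3) * (∑ y4 : ZMod q, f4 y4) * K :=
        Finset.sum_congr rfl fun y1 _ => e2 _
    _ = (∑ y1 : ZMod q, f1 y1) * (∑ y2 : ZMod q, f2 y2) * (∑ y3 : ZMod q, f3 y3)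
          * (∑ y4 : ZMod q, f4 y4) * K := by
        calc (∑ y1 : ZMod q,
            f1 y1 * (∑ y2 : ZMod q, f2 y2) * (∑ y3 : ZMod q, f3 y3) * (∑ y4 : ZMod q, f4 y4) * K)
            = ∑ y1 : ZMod q, ((∑ y2 : ZMod q, f2 y2) * (∑ y3 : ZMod q, f3 y3)
              * (∑ y4 : ZMod q, f4 y4) * K) * f1 y1 :=
              Finset.sum_congr rfl (fun y _ => by ring)
          _ = ((∑ y2 : ZMod q, f2 y2) * (∑ y3 : ZMod q, f3 y3)
              * (∑ y4 : ZMod q, f4 y4) * K) * ∑ y1 : ZMod q, f1 y1 := (Finset.mul_sum _ _ _).symm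
          _ = (∑ y1 : ZMod q, f1 y1) * (∑ y2 : ZMod q, f2 y2) * (∑ y3 : ZMod q, f3 y3)
              * (∑ y4 : ZMod q, f4 y4) * K := by ring

lemma inner_eq (q a n : ℕ) [NeZero q] (h : ZMod q × ZMod q × ZMod q × ZMod q) :
    (∑ y : ZMod q × ZMod q × ZMod q × ZMod q, gfun q a n (y + h) * (starRingEnd ℂ) (gfun q a n y))
    = (if 2 * (a : ZMod q) * (h.1 + sigq q h) = 0 then (q : ℂ) else 0)
    * (if 2 * (a : ZMod q) * (h.2.1 + sigq q h) = 0 then (q : ℂ) else 0)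
    * (if 2 * (a : ZMod q) * (h.2.2.1 + sigq q h) = 0 then (q : ℂ) else 0)
    * (if 2 * (a : ZMod q) * (h.2.2.2 + sigq q h) = 0 then (q : ℂ) else 0)
    * ZMod.stdAddChar ((a : ZMod q) * (h.1^2 + h.2.1^2 + h.2.2.1^2 + h.2.2.2^2
        + (sigq q h)^2 - 2 * (n : ZMod q) * sigq q h)) := by
  obtain ⟨h1, h2, h3, h4⟩ := h
  simp only [sigq]
  have point : ∀ y : ZMod q × ZMod q × ZMod q × ZMod q,
      gfun q a n (y + (h1, h2, h3, h4)) * (starRingEnd ℂ) (gfun q a n y)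
      = ZMod.stdAddChar (y.1 * (2 * (a:ZMod q) * (h1 + (h1+h2+h3+h4))))
      * ZMod.stdAddChar (y.2.1 * (2 * (a:ZMod q) * (h2 + (h1+h2+h3+h4))))
      * ZMod.stdAddChar (y.2.2.1 * (2 * (a:ZMod q) * (h3 + (h1+h2+h3+h4))))
      * ZMod.stdAddChar (y.2.2.2 * (2 * (a:ZMod q) * (h4 + (h1+h2+h3+h4))))
      * ZMod.stdAddChar ((a : ZMod q) * (h1^2 + h2^2 + h3^2 + h4^2
        + (h1+h2+h3+h4)^2 - 2 * (n : ZMod q) * (h1+h2+h3+h4))) := by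
    rintro ⟨y1, y2, y3, y4⟩
    simp only [gfun, Prod.mk_add_mk]
    rw [conj_stdAddChar]
    rw [← AddChar.map_add_eq_mul, ← AddChar.map_add_eq_mul, ← AddChar.map_add_eq_mul,
      ← AddChar.map_add_eq_mul, ← AddChar.map_add_eq_mul]
    congr 1
    ring
  rw [Finset.sum_congr rfl fun y _ => point y]
  rw [Fintype.sum_prod_type]
  have inner2 : ∀ y1 : ZMod q, (∑ w : ZMod q × ZMod q × ZMod q,
        ZMod.stdAddChar (y1 * (2 * (a:ZMod q) * (h1 + (h1+h2+h3+h4))))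
      * ZMod.stdAddChar (w.1 * (2 * (a:ZMod q) * (h2 + (h1+h2+h3+h4))))
      * ZMod.stdAddChar (w.2.1 * (2 * (a:ZMod q) * (h3 + (h1+h2+h3+h4))))
      * ZMod.stdAddChar (w.2.2 * (2 * (a:ZMod q) * (h4 + (h1+h2+h3+h4))))
      * ZMod.stdAddChar ((a : ZMod q) * (h1^2 + h2^2 + h3^2 + h4^2
        + (h1+h2+h3+h4)^2 - 2 * (n : ZMod q) * (h1+h2+h3+h4))))
      = ∑ y2 : ZMod q, ∑ y3 : ZMod q, ∑ y4 : ZMod q,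
        ZMod.stdAddChar (y1 * (2 * (a:ZMod q) * (h1 + (h1+h2+h3+h4))))
      * ZMod.stdAddChar (y2 * (2 * (a:ZMod q) * (h2 + (h1+h2+h3+h4))))
      * ZMod.stdAddChar (y3 * (2 * (a:ZMod q) * (h3 + (h1+h2+h3+h4))))
      * ZMod.stdAddChar (y4 * (2 * (a:ZMod q) * (h4 + (h1+h2+h3+h4))))
      * ZMod.stdAddChar ((a : ZMod q) * (h1^2 + h2^2 + h3^2 + h4^2
        + (h1+h2+h3+h4)^2 - 2 * (n : ZMod q) * (h1+h2+h3+h4))) := by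
    intro y1
    rw [Fintype.sum_prod_type]
    exact Finset.sum_congr rfl fun y2 _ => Fintype.sum_prod_type _
  rw [Finset.sum_congr rfl fun y1 _ => inner2 y1]
  rw [sum4_factor]
  rw [AddChar.sum_mulShift _ (ZMod.isPrimitive_stdAddChar q),
    AddChar.sum_mulShift _ (ZMod.isPrimitive_stdAddChar q),
    AddChar.sum_mulShift _ (ZMod.isPrimitive_stdAddChar q),
    AddChar.sum_mulShift _ (ZMod.isPrimitive_stdAddChar q)]
  rw [ZMod.card]
  simp [apply_ite (Nat.cast : ℕ → ℂ)]
  split_ifs <;> simp [*] <;> ring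

lemma abs_stdAddChar (q : ℕ) [NeZero q] (z : ZMod q) :
    ‖ZMod.stdAddChar z‖ = 1 := by
  rw [ZMod.stdAddChar_apply]
  exact Circle.norm_coe _

lemma key_bound (q a n : ℕ) [NeZero q] (ha : IsUnit ((a : ℕ) : ZMod q)) :
    ‖expSumS n q a‖ ^ 2 ≤ (q : ℝ)^4 * (Tset q).card := by
  set S := expSumS n q a with hSdef
  have hS : S = ∑ v : ZMod q × ZMod q × ZMod q × ZMod q, gfun q a n v := expSumS_eq q a n
  have habs : ‖S‖ ^ 2 = ‖S * (starRingEnd ℂ) S‖ := by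
    rw [norm_mul, Complex.norm_conj, sq]
  have expand : S * (starRingEnd ℂ) S
      = ∑ h : ZMod q × ZMod q × ZMod q × ZMod q,
          ∑ y : ZMod q × ZMod q × ZMod q × ZMod q,
            gfun q a n (y + h) * (starRingEnd ℂ) (gfun q a n y) := by
    rw [hS, map_sum, Finset.sum_mul_sum]
    conv_lhs => rw [Finset.sum_comm]
    conv_rhs => rw [Finset.sum_comm]
    refine Finset.sum_congr rfl fun y _ => ?_
    exact (Fintype.sum_equiv (Equiv.addLeft y)
      (fun h => gfun q a n (y + h) * (starRingEnd ℂ) (gfun q a n y))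
      (fun x => gfun q a n x * (starRingEnd ℂ) (gfun q a n y)) (fun h => rfl)).symm
  have hiff : ∀ x : ZMod q, (2 * ((a : ℕ) : ZMod q) * x = 0) ↔ (2 * x = 0) := fun x => by
    rw [show 2 * ((a : ℕ) : ZMod q) * x = ((a : ℕ) : ZMod q) * (2 * x) by ring,
      ha.mul_right_eq_zero]
  have habsA : ∀ h : ZMod q × ZMod q × ZMod q × ZMod q,
      ‖∑ y : ZMod q × ZMod q × ZMod q × ZMod q,
        gfun q a n (y + h) * (starRingEnd ℂ) (gfun q a n y)‖
      ≤ if h ∈ Tset q then (q : ℝ)^4 else 0 := by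
    intro h
    rw [inner_eq, norm_mul, norm_mul, norm_mul, norm_mul, abs_stdAddChar, mul_one]
    simp only [apply_ite norm, norm_zero, Complex.norm_natCast, hiff]
    by_cases c1 : 2 * (h.1 + sigq q h) = 0 <;>
      by_cases c2 : 2 * (h.2.1 + sigq q h) = 0 <;>
        by_cases c3 : 2 * (h.2.2.1 + sigq q h) = 0 <;>
          by_cases c4 : 2 * (h.2.2.2 + sigq q h) = 0 <;>
            simp [mem_Tset, c1, c2, c3, c4, mul_assoc, pow_succ, pow_zero, one_mul] <;> try norm_num [mul_assoc]
  calc ‖S‖ ^ 2 = ‖S * (starRingEnd ℂ) S‖ := habs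
    _ = ‖∑ h : ZMod q × ZMod q × ZMod q × ZMod q,
          ∑ y : ZMod q × ZMod q × ZMod q × ZMod q,
            gfun q a n (y + h) * (starRingEnd ℂ) (gfun q a n y)‖ := by rw [expand]
    _ ≤ ∑ h : ZMod q × ZMod q × ZMod q × ZMod q, 
          ‖∑ y : ZMod q × ZMod q × ZMod q × ZMod q,
            gfun q a n (y + h) * (starRingEnd ℂ) (gfun q a n y)‖ :=
        norm_sum_le _ _
    _ ≤ ∑ h : ZMod q × ZMod q × ZMod q × ZMod q, (if h ∈ Tset q then (q : ℝ)^4 else 0) :=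
        Finset.sum_le_sum fun h _ => habsA h
    _ = (q : ℝ)^4 * (Tset q).card := by
        rw [Finset.sum_ite_mem, Finset.univ_inter, Finset.sum_const, nsmul_eq_mul]
        ring

lemma sq_le_to_le {x B : ℝ} (hx : 0 ≤ x) (hB : 0 ≤ B) (h : x ^ 2 ≤ B ^ 2) : x ≤ B := by
  nlinarith

theorem expSumS_bound (n p k a : ℕ) (hp : p.Prime) (hk : 1 ≤ k)
    (ha : Nat.Coprime a (p ^ k)) :
    (¬ p ∣ 10 → ‖expSumS n (p ^ k) a‖ ≤ ((p : ℝ) ^ k) ^ 2) ∧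
    (p = 5 → ‖expSumS n (p ^ k) a‖ ≤ Real.sqrt 5 * ((p : ℝ) ^ k) ^ 2) ∧
    (p = 2 → ‖expSumS n (p ^ k) a‖ ≤ 4 * ((p : ℝ) ^ k) ^ 2) := by
  haveI : NeZero (p ^ k) := ⟨pow_ne_zero k hp.pos.ne'⟩
  have haU : IsUnit ((a : ℕ) : ZMod (p ^ k)) := (ZMod.isUnit_iff_coprime a (p ^ k)).mpr ha
  have hkey := key_bound (p ^ k) a n haU
  have habs0 : (0 : ℝ) ≤ ‖expSumS n (p ^ k) a‖ := norm_nonneg _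
  have hq0 : (0 : ℝ) ≤ (p : ℝ) ^ k := by positivity
  have hcast : ((p ^ k : ℕ) : ℝ) = (p : ℝ) ^ k := by push_cast; ring
  refine ⟨fun h10 => ?_, fun h5 => ?_, fun h2 => ?_⟩
  · have hp2 : p ≠ 2 := fun h => h10 (h ▸ by norm_num)
    have hp5 : p ≠ 5 := fun h => h10 (h ▸ by norm_num)
    have hu2 : IsUnit (2 : ZMod (p ^ k)) := by
      have : IsUnit (((2 : ℕ)) : ZMod (p ^ k)) := (ZMod.isUnit_iff_coprime 2 (p ^ k)).mpr
        (Nat.Coprime.pow_right k (((Nat.coprime_primes Nat.prime_two hp).mpr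
          (fun h => hp2 h.symm))))
      simpa using this
    have hu5 : IsUnit (5 : ZMod (p ^ k)) := by
      have : IsUnit (((5 : ℕ)) : ZMod (p ^ k)) := (ZMod.isUnit_iff_coprime 5 (p ^ k)).mpr
        (Nat.Coprime.pow_right k (((Nat.coprime_primes (by norm_num) hp).mpr
          (fun h => hp5 h.symm))))
      simpa using this
    have hcard := Tset_card_one hu2 hu5
    refine sq_le_to_le habs0 (by positivity) ?_
    calc ‖expSumS n (p ^ k) a‖ ^ 2
        ≤ ((p ^ k : ℕ) : ℝ)^4 * (Tset (p ^ k)).card := hkey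
      _ ≤ ((p ^ k : ℕ) : ℝ)^4 * 1 := by
          have : ((Tset (p ^ k)).card : ℝ) ≤ 1 := by exact_mod_cast hcard
          nlinarith [pow_nonneg (Nat.cast_nonneg (p ^ k) : (0:ℝ) ≤ _) 4]
      _ = (((p : ℝ) ^ k) ^ 2) ^ 2 := by rw [hcast]; ring
  · subst h5
    have hu2 : IsUnit (2 : ZMod (5 ^ k)) := by
      have : IsUnit (((2 : ℕ)) : ZMod (5 ^ k)) := (ZMod.isUnit_iff_coprime 2 (5 ^ k)).mpr
        (Nat.Coprime.pow_right k (by norm_num))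
      simpa using this
    have hcard := Tset_card_five hk hu2
    refine sq_le_to_le habs0 (by positivity) ?_
    have hsq5 : Real.sqrt 5 ^ 2 = 5 := Real.sq_sqrt (by norm_num)
    calc ‖expSumS n (5 ^ k) a‖ ^ 2
        ≤ ((5 ^ k : ℕ) : ℝ)^4 * (Tset (5 ^ k)).card := hkey
      _ ≤ ((5 ^ k : ℕ) : ℝ)^4 * 5 := by
          have : ((Tset (5 ^ k)).card : ℝ) ≤ 5 := by exact_mod_cast hcard
          nlinarith [pow_nonneg (Nat.cast_nonneg (5 ^ k) : (0:ℝ) ≤ _) 4]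
      _ = (Real.sqrt 5 * ((5 : ℝ) ^ k) ^ 2) ^ 2 := by
          rw [mul_pow, hsq5, hcast]; ring
  · subst h2
    have hu5 : IsUnit (5 : ZMod (2 ^ k)) := by
      have : IsUnit (((5 : ℕ)) : ZMod (2 ^ k)) := (ZMod.isUnit_iff_coprime 5 (2 ^ k)).mpr
        (Nat.Coprime.pow_right k (by norm_num))
      simpa using this
    have hcard := Tset_card_two hk hu5
    refine sq_le_to_le habs0 (by positivity) ?_
    calc ‖expSumS n (2 ^ k) a‖ ^ 2
        ≤ ((2 ^ k : ℕ) : ℝ)^4 * (Tset (2 ^ k)).card := hkey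
      _ ≤ ((2 ^ k : ℕ) : ℝ)^4 * 16 := by
          have : ((Tset (2 ^ k)).card : ℝ) ≤ 16 := by exact_mod_cast hcard
          nlinarith [pow_nonneg (Nat.cast_nonneg (2 ^ k) : (0:ℝ) ≤ _) 4]
      _ = (4 * ((2 : ℝ) ^ k) ^ 2) ^ 2 := by rw [hcast]; ring
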